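/- For every constant c>0 there exist constants C>0 and δ>0 such that the following holds: whenever M is even, M_1(R)≥M_1(L), d_max^4≤δ·M and M_2(R)≤c·d_max³, the probability that a uniformly random restricted pairing in M(L,R,d) contains a loop or a double pair is at most C·d_max^4/M. -/

import Mathlib

open Finset

namespace RandomBGraph

/-- The type of points: bucket `i` contains `d i` labelled points. -/
abbrev Pt (n : ℕ) (d : Fin n → ℕ) := Σ i : Fin n, Fin (d i)

/-- Restricted pairings: perfect matchings (fixed-point-free involutions) of the points
in which no pair has both of its points in buckets belonging to `L`. -/
def restricted (n : ℕ) (d : Fin n → ℕ) (L : Finset (Fin n)) :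
    Finset (Pt n d → Pt n d) :=
  Finset.univ.filter (fun f =>
    (∀ p, f (f p) = p) ∧ (∀ p, f p ≠ p) ∧ (∀ p : Pt n d, p.1 ∈ L → (f p).1 ∉ L))

variable {n : ℕ} {d : Fin n → ℕ}

/-- number of loops of a pairing -/
def numLoops (f : Pt n d → Pt n d) : ℕ :=
  (Finset.univ.filter (fun p : Pt n d => (f p).1 = p.1)).card / 2

/-- number of mixed double pairs -/
def numMixedDoubles (L : Finset (Fin n)) (f : Pt n d → Pt n d) : ℕ :=
  (Finset.univ.filter (fun pq : Pt n d × Pt n d =>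
    pq.1 ≠ pq.2 ∧ pq.1.1 = pq.2.1 ∧ pq.1.1 ∈ L ∧ (f pq.1).1 ∉ L ∧
      (f pq.1).1 = (f pq.2).1)).card / 2

/-- number of pure double pairs -/
def numPureDoubles (L : Finset (Fin n)) (f : Pt n d → Pt n d) : ℕ :=
  (Finset.univ.filter (fun pq : Pt n d × Pt n d =>
    pq.1 ≠ pq.2 ∧ pq.1.1 = pq.2.1 ∧ pq.1.1 ∉ L ∧ (f pq.1).1 ∉ L ∧
      (f pq.1).1 = (f pq.2).1 ∧ (f pq.1).1 ≠ pq.1.1)).card / 4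

def M (n : ℕ) (d : Fin n → ℕ) : ℕ := ∑ i, d i

def M1 (d : Fin n → ℕ) (S : Finset (Fin n)) : ℕ := ∑ i ∈ S, d i

def M2 (d : Fin n → ℕ) (S : Finset (Fin n)) : ℕ := ∑ i ∈ S, d i * (d i - 1)

def dmax (d : Fin n → ℕ) : ℕ := Finset.univ.sup d

section Aux
variable {L : Finset (Fin n)}

lemma mem_restricted_iff {f : Pt n d → Pt n d} :
    f ∈ restricted n d L ↔
      (∀ p, f (f p) = p) ∧ (∀ p, f p ≠ p) ∧ (∀ p : Pt n d, p.1 ∈ L → (f p).1 ∉ L) := by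
  simp [restricted]

def conj (a b : Pt n d) (f : Pt n d → Pt n d) : Pt n d → Pt n d :=
  fun x => Equiv.swap a b (f (Equiv.swap a b x))

lemma conj_conj (a b : Pt n d) (f : Pt n d → Pt n d) : conj a b (conj a b f) = f := by
  funext x; simp [conj, Equiv.swap_apply_self]

lemma conj_mem {a b : Pt n d} {f : Pt n d → Pt n d} (hf : f ∈ restricted n d L)
    (ha : a.1 ∉ L) (hb : b.1 ∉ L) : conj a b f ∈ restricted n d L := by
  rw [mem_restricted_iff] at hf ⊢
  obtain ⟨h1, h2, h3⟩ := hf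
  refine ⟨fun p => by simp [conj, Equiv.swap_apply_self, h1], fun p hp => ?_, fun p hp => ?_⟩
  · have := (Equiv.swap a b).injective (by simpa [conj] using congrArg (Equiv.swap a b) hp.symm)
    exact h2 _ this.symm
  · have hpa : p ≠ a := fun h => ha (h ▸ hp)
    have hpb : p ≠ b := fun h => hb (h ▸ hp)
    simp only [conj, Equiv.swap_apply_of_ne_of_ne hpa hpb]
    rcases eq_or_ne (f p) a with h | h
    · rw [h, Equiv.swap_apply_left]; exact hb
    rcases eq_or_ne (f p) b with h' | h'
    · rw [h', Equiv.swap_apply_right]; exact ha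
    · rw [Equiv.swap_apply_of_ne_of_ne h h']; exact h3 p hp

/-- counting points whose bucket satisfies a predicate -/
lemma card_pts (P : Fin n → Prop) [DecidablePred P] :
    (Finset.univ.filter (fun p : Pt n d => P p.1)).card = ∑ i ∈ Finset.univ.filter P, d i := by
  have : (Finset.univ.filter (fun p : Pt n d => P p.1)) =
      (Finset.univ.filter P).sigma (fun i => Finset.univ) := by
    ext x; simp [Finset.mem_sigma]
  rw [this, Finset.card_sigma]
  simp

lemma card_bucket (i : Fin n) :
    (Finset.univ.filter (fun p : Pt n d => p.1 = i)).card = d i := by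
  rw [card_pts (P := fun j => j = i)]
  simp [Finset.filter_eq']

/-- counting ordered same-bucket pairs with bucket satisfying P -/
lemma card_pairs_le (P : Fin n → Prop) [DecidablePred P] :
    (Finset.univ.filter (fun pq : Pt n d × Pt n d =>
      pq.1.1 = pq.2.1 ∧ pq.1 ≠ pq.2 ∧ P pq.1.1)).card ≤
      ∑ i ∈ Finset.univ.filter P, d i * (d i - 1) := by
  classical
  set s := Finset.univ.filter (fun pq : Pt n d × Pt n d =>
      pq.1.1 = pq.2.1 ∧ pq.1 ≠ pq.2 ∧ P pq.1.1) with hs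
  rw [Finset.card_eq_sum_card_fiberwise (f := fun pq => pq.1) (t := Finset.univ)
    (fun x _ => Finset.mem_univ _)]
  have hfib : ∀ p : Pt n d, (s.filter (fun pq => pq.1 = p)).card ≤
      (if P p.1 then d p.1 - 1 else 0) := by
    intro p
    by_cases hP : P p.1
    · rw [if_pos hP]
      have : (s.filter (fun pq => pq.1 = p)).card ≤
          ((Finset.univ.filter (fun q : Pt n d => q.1 = p.1)).erase p).card := by
        apply Finset.card_le_card_of_injOn (fun pq => pq.2)
        · intro pq hpq
          simp only [hs, Finset.mem_coe, Finset.mem_filter, Finset.mem_univ, true_and] at hpq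
          obtain ⟨⟨h1, h2, _⟩, h4⟩ := hpq
          subst h4
          exact Finset.mem_erase.2 ⟨fun h => h2 (by exact h.symm), by
            simp [h1.symm]⟩
        · intro x hx y hy hxy
          simp only [hs, Finset.mem_coe, Finset.mem_filter] at hx hy
          exact Prod.ext (hx.2.trans hy.2.symm) hxy
      calc _ ≤ _ := this
        _ = d p.1 - 1 := by
            rw [Finset.card_erase_of_mem (by simp), card_bucket]
    · rw [if_neg hP]
      convert Nat.le_refl 0
      rw [Finset.card_eq_zero, Finset.filter_eq_empty_iff]
      rintro pq hpq rfl
      simp only [hs, Finset.mem_filter] at hpq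
      exact hP hpq.2.2.2
  calc ∑ p : Pt n d, (s.filter (fun pq => pq.1 = p)).card
      ≤ ∑ p : Pt n d, (if P p.1 then d p.1 - 1 else 0) := Finset.sum_le_sum (fun p _ => hfib p)
    _ = ∑ i : Fin n, ∑ _a : Fin (d i), (if P i then d i - 1 else 0) := by
        rw [← Finset.sum_sigma Finset.univ (fun _ => Finset.univ)
          (fun p : Pt n d => if P p.1 then d p.1 - 1 else 0)]
        congr 1
    _ = ∑ i : Fin n, (if P i then d i * (d i - 1) else 0) := by
        apply Finset.sum_congr rfl; intro i _
        rw [Finset.sum_const, Finset.card_univ, Fintype.card_fin, smul_eq_mul]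
        by_cases h : P i <;> simp [h]
    _ = ∑ i ∈ Finset.univ.filter P, d i * (d i - 1) := (Finset.sum_filter _ _).symm

/-- witness finset for the loop switching -/
def Wl (L : Finset (Fin n)) (f : Pt n d → Pt n d) : Finset ((Pt n d × Pt n d) × Pt n d) :=
  Finset.univ.filter (fun w => f w.1.1 = w.1.2 ∧ w.1.1.1 = w.1.2.1 ∧ w.1.1 ≠ w.1.2 ∧
    w.1.1.1 ∉ L ∧ w.2.1 ∉ L ∧ w.2 ≠ w.1.1 ∧ w.2 ≠ w.1.2)

lemma mem_Wl {f : Pt n d → Pt n d} {p q r : Pt n d} :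
    ((p, q), r) ∈ Wl L f ↔
      (f p = q ∧ p.1 = q.1 ∧ p ≠ q ∧ p.1 ∉ L ∧ r.1 ∉ L ∧ r ≠ p ∧ r ≠ q) := by
  rw [Wl, Finset.mem_filter]
  exact ⟨fun h => h.2, fun h => ⟨Finset.mem_univ _, h⟩⟩

lemma conj_loop_apply {f : Pt n d → Pt n d} {p q r : Pt n d}
    (hfp : f p = q) (hpq : p ≠ q) (hrp : r ≠ p) : conj q r f p = r := by
  rw [conj, Equiv.swap_apply_of_ne_of_ne hpq hrp.symm, hfp, Equiv.swap_apply_left]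

set_option maxHeartbeats 2000000 in
lemma loop_count :
    ((restricted n d L).filter (fun f => ∃ p, (f p).1 = p.1)).card *
      ((Finset.univ.filter (fun p : Pt n d => p.1 ∉ L)).card - 2) ≤
    (restricted n d L).card * ∑ i ∈ Finset.univ.filter (· ∉ L), d i * (d i - 1) := by
  classical
  set A := restricted n d L with hA
  set Bl := A.filter (fun f => ∃ p, (f p).1 = p.1) with hBl
  set Rpts := Finset.univ.filter (fun p : Pt n d => p.1 ∉ L) with hRpts
  -- lower bound on fibers
  have h1 : ∀ f ∈ Bl, Rpts.card - 2 ≤ (Wl L f).card := by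
    intro f hf
    rw [hBl, Finset.mem_filter] at hf
    obtain ⟨hfA, p0, hp0⟩ := hf
    obtain ⟨hinv, hfpf, hL⟩ := mem_restricted_iff.1 hfA
    have hpq : p0 ≠ f p0 := fun h => hfpf p0 h.symm
    have hp0L : p0.1 ∉ L := fun h => hL p0 h (hp0.symm ▸ h)
    have hsub : (Rpts \ {p0, f p0}).image (fun r => ((p0, f p0), r)) ⊆ Wl L f := by
      intro w hw
      simp only [Finset.mem_image, Finset.mem_sdiff, hRpts, Finset.mem_filter,
        Finset.mem_insert, Finset.mem_singleton, Finset.mem_univ, true_and] at hw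
      obtain ⟨r, ⟨hrL, hrne⟩, rfl⟩ := hw
      exact mem_Wl.2 ⟨rfl, hp0.symm, hpq, hp0L, hrL, fun h => hrne (Or.inl h),
        fun h => hrne (Or.inr h)⟩
    calc Rpts.card - 2 ≤ Rpts.card - ({p0, f p0} : Finset (Pt n d)).card :=
          Nat.sub_le_sub_left (Finset.card_insert_le _ _ |>.trans (by simp)) _
      _ ≤ (Rpts \ {p0, f p0}).card := Finset.le_card_sdiff _ _
      _ = ((Rpts \ {p0, f p0}).image (fun r => ((p0, f p0), r))).card :=
          (Finset.card_image_of_injective _ (fun x y h => by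
            simpa using congrArg Prod.snd h)).symm
      _ ≤ (Wl L f).card := Finset.card_le_card hsub
  -- upper bound via injection
  have h5 : (A.sigma (fun f => Wl L f)).card ≤
      (A ×ˢ (Finset.univ.filter (fun pq : Pt n d × Pt n d =>
        pq.1.1 = pq.2.1 ∧ pq.1 ≠ pq.2 ∧ pq.1.1 ∉ L))).card := by
    apply Finset.card_le_card_of_injOn (fun x => (conj x.2.1.2 x.2.2 x.1, x.2.1))
    · rintro ⟨f, ⟨⟨p, q⟩, r⟩⟩ hx
      rw [Finset.mem_coe, Finset.mem_sigma] at hx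
      obtain ⟨hfA, hw⟩ := hx
      rw [mem_Wl] at hw
      obtain ⟨hfp, hbkt, hpq, hpL, hrL, hrp, hrq⟩ := hw
      refine Finset.mem_product.2 ⟨conj_mem hfA (hbkt ▸ hpL) hrL, ?_⟩
      simp only [Finset.mem_filter, Finset.mem_univ, true_and]
      exact ⟨hbkt, hpq, hpL⟩
    · rintro ⟨f, ⟨⟨p, q⟩, r⟩⟩ hx ⟨g, ⟨⟨p', q'⟩, r'⟩⟩ hy hxy
      simp only [Finset.coe_sigma, Set.mem_sigma_iff, Finset.mem_coe] at hx hy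
      obtain ⟨hfA, hw⟩ := hx
      obtain ⟨hgA, hw'⟩ := hy
      rw [mem_Wl] at hw hw'
      simp only [Prod.mk.injEq] at hxy
      obtain ⟨hconj, hp, hq⟩ := hxy
      subst hp; subst hq
      have hr : r = r' := by
        have e1 : conj q r f p = r := conj_loop_apply hw.1 hw.2.2.1 hw.2.2.2.2.2.1
        have e2 : conj q r' g p = r' := conj_loop_apply hw'.1 hw'.2.2.1 hw'.2.2.2.2.2.1
        rw [← e1, hconj, e2]
      subst hr
      have hfg : f = g := by
        have := congrArg (conj q r) hconj
        rwa [conj_conj, conj_conj] at this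
      subst hfg; rfl
  calc Bl.card * (Rpts.card - 2) ≤ ∑ f ∈ Bl, (Wl L f).card := by
        simpa using Finset.card_nsmul_le_sum Bl _ _ h1
    _ ≤ ∑ f ∈ A, (Wl L f).card := Finset.sum_le_sum_of_subset (Finset.filter_subset _ _)
    _ = (A.sigma (fun f => Wl L f)).card := (Finset.card_sigma _ _).symm
    _ ≤ _ := h5
    _ = A.card * (Finset.univ.filter (fun pq : Pt n d × Pt n d =>
        pq.1.1 = pq.2.1 ∧ pq.1 ≠ pq.2 ∧ pq.1.1 ∉ L)).card := Finset.card_product _ _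
    _ ≤ _ := Nat.mul_le_mul_left _ (card_pairs_le (P := fun i => i ∉ L))

/-- witness finset for the double-pair switching -/
def Wd (L : Finset (Fin n)) (f : Pt n d → Pt n d) :
    Finset (((Pt n d × Pt n d) × (Pt n d × Pt n d)) × (Pt n d × Pt n d)) :=
  Finset.univ.filter (fun w =>
    f w.1.1.1 = w.1.2.1 ∧ f w.1.1.2 = w.1.2.2 ∧ w.1.1.1.1 = w.1.1.2.1 ∧ w.1.1.1 ≠ w.1.1.2 ∧
    w.1.2.1.1 ∉ L ∧ w.1.2.1.1 = w.1.2.2.1 ∧ w.1.2.1.1 ≠ w.1.1.1.1 ∧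
    w.2.1.1 ∉ L ∧ w.2.2.1 ∉ L ∧
    w.2.1 ≠ w.1.1.1 ∧ w.2.1 ≠ w.1.1.2 ∧ w.2.1 ≠ w.1.2.1 ∧ w.2.1 ≠ w.1.2.2 ∧
    w.2.2 ≠ w.1.1.1 ∧ w.2.2 ≠ w.1.1.2 ∧ w.2.2 ≠ w.1.2.1 ∧ w.2.2 ≠ w.1.2.2 ∧
    w.2.2 ≠ w.2.1 ∧ w.2.2 ≠ f w.2.1)

lemma mem_Wd {f : Pt n d → Pt n d} {p q a b r1 r2 : Pt n d} :
    (((p, q), (a, b)), (r1, r2)) ∈ Wd L f ↔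
      (f p = a ∧ f q = b ∧ p.1 = q.1 ∧ p ≠ q ∧
       a.1 ∉ L ∧ a.1 = b.1 ∧ a.1 ≠ p.1 ∧
       r1.1 ∉ L ∧ r2.1 ∉ L ∧
       r1 ≠ p ∧ r1 ≠ q ∧ r1 ≠ a ∧ r1 ≠ b ∧
       r2 ≠ p ∧ r2 ≠ q ∧ r2 ≠ a ∧ r2 ≠ b ∧ r2 ≠ r1 ∧ r2 ≠ f r1) := by
  rw [Wd, Finset.mem_filter]
  exact ⟨fun h => h.2, fun h => ⟨Finset.mem_univ _, h⟩⟩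

lemma conj_dbl_apply₁ {f : Pt n d → Pt n d} {p q a b r1 r2 : Pt n d}
    (hfp : f p = a) (hpa : p ≠ a) (hpb : p ≠ b)
    (hr1p : r1 ≠ p) (hr1b : r1 ≠ b) (hr2p : r2 ≠ p) (hr2r1 : r2 ≠ r1) :
    conj b r2 (conj a r1 f) p = r1 := by
  have h1 : conj a r1 f p = r1 := by
    rw [conj, Equiv.swap_apply_of_ne_of_ne hpa hr1p.symm, hfp, Equiv.swap_apply_left]
  rw [conj, Equiv.swap_apply_of_ne_of_ne hpb hr2p.symm, h1,
    Equiv.swap_apply_of_ne_of_ne hr1b hr2r1.symm]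

lemma conj_dbl_apply₂ {f : Pt n d → Pt n d} {p q a b r1 r2 : Pt n d}
    (hfq : f q = b) (hqa : q ≠ a) (hqb : q ≠ b) (hba : b ≠ a)
    (hr1q : r1 ≠ q) (hr1b : r1 ≠ b) (hr2q : r2 ≠ q) :
    conj b r2 (conj a r1 f) q = r2 := by
  have h1 : conj a r1 f q = b := by
    rw [conj, Equiv.swap_apply_of_ne_of_ne hqa hr1q.symm, hfq,
      Equiv.swap_apply_of_ne_of_ne hba hr1b.symm]
  rw [conj, Equiv.swap_apply_of_ne_of_ne hqb hr2q.symm, h1, Equiv.swap_apply_left]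

set_option maxHeartbeats 2000000 in
lemma double_count :
    ((restricted n d L).filter (fun f => ∃ p q, p ≠ q ∧ p.1 = q.1 ∧ (f p).1 ∉ L ∧
        (f p).1 = (f q).1 ∧ (f p).1 ≠ p.1)).card *
      ((((Finset.univ.filter (fun p : Pt n d => p.1 ∉ L)).card - 4)) *
        (((Finset.univ.filter (fun p : Pt n d => p.1 ∉ L)).card - 6))) ≤
    (restricted n d L).card *
      ((∑ i ∈ Finset.univ.filter (fun _ : Fin n => True), d i * (d i - 1)) *
        ∑ i ∈ Finset.univ.filter (· ∉ L), d i * (d i - 1)) := by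
  classical
  set A := restricted n d L with hA
  set Bd := A.filter (fun f => ∃ p q, p ≠ q ∧ p.1 = q.1 ∧ (f p).1 ∉ L ∧
      (f p).1 = (f q).1 ∧ (f p).1 ≠ p.1) with hBd
  set Rpts := Finset.univ.filter (fun p : Pt n d => p.1 ∉ L) with hRpts
  -- lower bound on fibers
  have h1 : ∀ f ∈ Bd, (Rpts.card - 4) * (Rpts.card - 6) ≤ (Wd L f).card := by
    intro f hf
    rw [hBd, Finset.mem_filter] at hf
    obtain ⟨hfA, p, q, hpq, hbkt, haL, hab, hap⟩ := hf
    obtain ⟨hinv, hfpf, hL⟩ := mem_restricted_iff.1 hfA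
    set a := f p with haa
    set b := f q with hbb
    set S : Finset (Pt n d) := {p, q, a, b} with hS
    have hScard : S.card ≤ 4 := by
      calc S.card ≤ ({q, a, b} : Finset (Pt n d)).card + 1 := Finset.card_insert_le _ _
        _ ≤ (({a, b} : Finset (Pt n d)).card + 1) + 1 :=
            Nat.add_le_add_right (Finset.card_insert_le _ _) 1
        _ ≤ ((({b} : Finset (Pt n d)).card + 1) + 1) + 1 :=
            Nat.add_le_add_right (Nat.add_le_add_right (Finset.card_insert_le _ _) 1) 1
        _ = 4 := by simp
    have hdisj : ∀ x ∈ Rpts \ S, ∀ y ∈ Rpts \ S, x ≠ y →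
        Disjoint ((Rpts \ (S ∪ {x, f x})).image (fun r2 => (((p, q), (a, b)), (x, r2))))
          ((Rpts \ (S ∪ {y, f y})).image (fun r2 => (((p, q), (a, b)), (y, r2)))) := by
      intro x _ y _ hxy
      rw [Finset.disjoint_left]
      intro w hwx hwy
      simp only [Finset.mem_image] at hwx hwy
      obtain ⟨r2, _, rfl⟩ := hwx
      obtain ⟨r2', _, h⟩ := hwy
      exact hxy (by simpa using (congrArg (fun z => z.2.1) h).symm)
    have hsub : (Rpts \ S).biUnion (fun r1 =>
        (Rpts \ (S ∪ {r1, f r1})).image (fun r2 => (((p, q), (a, b)), (r1, r2)))) ⊆ Wd L f := by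
      intro w hw
      simp only [Finset.mem_biUnion, Finset.mem_image, Finset.mem_sdiff] at hw
      obtain ⟨r1, ⟨hr1R, hr1S⟩, r2, ⟨hr2R, hr2S⟩, rfl⟩ := hw
      rw [hRpts, Finset.mem_filter] at hr1R hr2R
      rw [hS] at hr1S
      simp only [hS, Finset.mem_union, Finset.mem_insert, Finset.mem_singleton, not_or] at hr1S hr2S
      exact mem_Wd.2 ⟨haa.symm, hbb.symm, hbkt, hpq, haL, hab, hap, hr1R.2, hr2R.2,
        hr1S.1, hr1S.2.1, hr1S.2.2.1, hr1S.2.2.2,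
        hr2S.1.1, hr2S.1.2.1, hr2S.1.2.2.1, hr2S.1.2.2.2, hr2S.2.1, hr2S.2.2⟩
    have hU : ∀ r1 : Pt n d, (S ∪ {r1, f r1}).card ≤ 6 := by
      intro r1
      calc (S ∪ {r1, f r1}).card ≤ S.card + ({r1, f r1} : Finset (Pt n d)).card :=
            Finset.card_union_le _ _
        _ ≤ 4 + 2 := Nat.add_le_add hScard (le_trans (Finset.card_insert_le _ _) (by simp))
        _ = 6 := rfl
    calc (Rpts.card - 4) * (Rpts.card - 6)
        ≤ (Rpts \ S).card * (Rpts.card - 6) := by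
          apply Nat.mul_le_mul_right
          exact le_trans (Nat.sub_le_sub_left hScard _) (Finset.le_card_sdiff _ _)
      _ ≤ ∑ r1 ∈ Rpts \ S,
            ((Rpts \ (S ∪ {r1, f r1})).image (fun r2 => (((p, q), (a, b)), (r1, r2)))).card := by
          rw [← smul_eq_mul]
          apply Finset.card_nsmul_le_sum
          intro r1 _
          rw [Finset.card_image_of_injective _ (fun x y h => by
            simpa using congrArg (fun z => z.2.2) h)]
          exact le_trans (Nat.sub_le_sub_left (hU r1) _) (Finset.le_card_sdiff _ _)
      _ = ((Rpts \ S).biUnion (fun r1 =>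
            (Rpts \ (S ∪ {r1, f r1})).image (fun r2 => (((p, q), (a, b)), (r1, r2))))).card :=
          (Finset.card_biUnion hdisj).symm
      _ ≤ (Wd L f).card := Finset.card_le_card hsub
  -- upper bound via injection
  have h5 : (A.sigma (fun f => Wd L f)).card ≤
      (A ×ˢ ((Finset.univ.filter (fun pq : Pt n d × Pt n d =>
          pq.1.1 = pq.2.1 ∧ pq.1 ≠ pq.2 ∧ (fun _ : Fin n => True) pq.1.1)) ×ˢ
        (Finset.univ.filter (fun pq : Pt n d × Pt n d =>
          pq.1.1 = pq.2.1 ∧ pq.1 ≠ pq.2 ∧ pq.1.1 ∉ L)))).card := by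
    apply Finset.card_le_card_of_injOn
      (fun x => (conj x.2.1.2.2 x.2.2.2 (conj x.2.1.2.1 x.2.2.1 x.1), x.2.1))
    · rintro ⟨f, ⟨⟨⟨p, q⟩, ⟨a, b⟩⟩, ⟨r1, r2⟩⟩⟩ hx
      rw [Finset.mem_coe, Finset.mem_sigma] at hx
      obtain ⟨hfA, hw⟩ := hx
      rw [mem_Wd] at hw
      obtain ⟨hfp, hfq, hbkt, hpq, haL, hab, hap, hr1L, hr2L, _⟩ := hw
      obtain ⟨hinv, hfpf, hL⟩ := mem_restricted_iff.1 hfA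
      have habne : a ≠ b := by
        intro h
        apply hpq
        rw [← hinv p, hfp, h, ← hfq, hinv]
      refine Finset.mem_product.2 ⟨conj_mem (conj_mem hfA haL hr1L) (hab ▸ haL) hr2L, ?_⟩
      refine Finset.mem_product.2 ⟨?_, ?_⟩ <;>
        simp only [Finset.mem_filter, Finset.mem_univ, true_and]
      · exact ⟨hbkt, hpq, trivial⟩
      · exact ⟨hab, habne, haL⟩
    · rintro ⟨f, ⟨⟨⟨p, q⟩, ⟨a, b⟩⟩, ⟨r1, r2⟩⟩⟩ hx ⟨g, ⟨⟨⟨p', q'⟩, ⟨a', b'⟩⟩, ⟨r1', r2'⟩⟩⟩ hy hxy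
      simp only [Finset.coe_sigma, Set.mem_sigma_iff, Finset.mem_coe] at hx hy
      obtain ⟨hfA, hw⟩ := hx
      obtain ⟨hgA, hw'⟩ := hy
      rw [mem_Wd] at hw hw'
      have hconj : conj b r2 (conj a r1 f) = conj b' r2' (conj a' r1' g) :=
        congrArg Prod.fst hxy
      have hpp : p = p' := by simpa using congrArg (fun z => z.2.1.1) hxy
      have hqq : q = q' := by simpa using congrArg (fun z => z.2.1.2) hxy
      have haa : a = a' := by simpa using congrArg (fun z => z.2.2.1) hxy
      have hbb : b = b' := by simpa using congrArg (fun z => z.2.2.2) hxy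
      subst hpp; subst hqq; subst haa; subst hbb
      obtain ⟨hfp, hfq, hbkt, hpq, haL, hab, hap, hr1L, hr2L, hr1p, hr1q, hr1a, hr1b,
        hr2p, hr2q, hr2a, hr2b, hr2r1, hr2fr1⟩ := hw
      obtain ⟨hfp', hfq', hbkt', hpq', haL', hab', hap', hr1L', hr2L', hr1p', hr1q', hr1a', hr1b',
        hr2p', hr2q', hr2a', hr2b', hr2r1', hr2fr1'⟩ := hw'
      have hpa : p ≠ a := fun h => hap (congrArg Sigma.fst h).symm
      have hpb : p ≠ b := fun h => (hab ▸ hap) (congrArg Sigma.fst h).symm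
      have hqa : q ≠ a := fun h => (hbkt ▸ hap) (congrArg Sigma.fst h).symm
      have hqb : q ≠ b := fun h => (hbkt ▸ hab ▸ hap) (congrArg Sigma.fst h).symm
      obtain ⟨hinv, hfpf, hL⟩ := mem_restricted_iff.1 hfA
      obtain ⟨hinv', hfpf', hL'⟩ := mem_restricted_iff.1 hgA
      have hba : b ≠ a := by
        intro h
        apply hpq
        rw [← hinv p, hfp, ← h, ← hfq, hinv]
      have hr1eq : r1 = r1' := by
        have e1 : conj b r2 (conj a r1 f) p = r1 :=
          conj_dbl_apply₁ (q := q) hfp hpa hpb hr1p hr1b hr2p hr2r1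
        have e2 : conj b r2' (conj a r1' g) p = r1' :=
          conj_dbl_apply₁ (q := q) hfp' hpa hpb hr1p' hr1b' hr2p' hr2r1'
        rw [← e1, hconj, e2]
      subst hr1eq
      have hr2eq : r2 = r2' := by
        have e1 : conj b r2 (conj a r1 f) q = r2 :=
          conj_dbl_apply₂ (p := p) hfq hqa hqb hba hr1q hr1b hr2q
        have e2 : conj b r2' (conj a r1 g) q = r2' :=
          conj_dbl_apply₂ (p := p) hfq' hqa hqb hba hr1q' hr1b' hr2q'
        rw [← e1, hconj, e2]
      subst hr2eq
      have hfg : f = g := by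
        have := congrArg (fun h => conj a r1 (conj b r2 h)) hconj
        simpa only [conj_conj] using this
      subst hfg; rfl
  calc Bd.card * ((Rpts.card - 4) * (Rpts.card - 6)) ≤ ∑ f ∈ Bd, (Wd L f).card := by
        simpa using Finset.card_nsmul_le_sum Bd _ _ h1
    _ ≤ ∑ f ∈ A, (Wd L f).card := Finset.sum_le_sum_of_subset (Finset.filter_subset _ _)
    _ = (A.sigma (fun f => Wd L f)).card := (Finset.card_sigma _ _).symm
    _ ≤ _ := h5
    _ = A.card * ((Finset.univ.filter (fun pq : Pt n d × Pt n d =>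
          pq.1.1 = pq.2.1 ∧ pq.1 ≠ pq.2 ∧ (fun _ : Fin n => True) pq.1.1)).card *
        (Finset.univ.filter (fun pq : Pt n d × Pt n d =>
          pq.1.1 = pq.2.1 ∧ pq.1 ≠ pq.2 ∧ pq.1.1 ∉ L)).card) := by
        rw [Finset.card_product, Finset.card_product]
    _ ≤ _ := Nat.mul_le_mul_left _ (Nat.mul_le_mul
        (card_pairs_le (P := fun _ : Fin n => True)) (card_pairs_le (P := fun i => i ∉ L)))
lemma two_le_dmax {x y : Pt n d} (hne : x ≠ y) (hbkt : x.1 = y.1) : 2 ≤ dmax d := by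
  rcases x with ⟨i, u⟩
  rcases y with ⟨j, v⟩
  dsimp at hbkt
  subst hbkt
  have huv : (u : ℕ) ≠ (v : ℕ) := fun h => hne (by rw [Fin.ext h])
  have h2 : 2 ≤ d i := by have := u.isLt; have := v.isLt; omega
  exact le_trans h2 (Finset.le_sup (Finset.mem_univ i))


end Aux

set_option maxHeartbeats 2000000 in
/-- **Corollary (after Lemma 3)**: if `M₂(R) = O(d_max³)` then the probability that there
exists a loop or a double pair is `O(d_max⁴/M)`. -/
theorem prob_loop_or_double :
    ∀ c : ℝ, 0 < c →
      ∃ C : ℝ, 0 < C ∧ ∃ δ : ℝ, 0 < δ ∧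
        ∀ (n : ℕ) (d : Fin n → ℕ) (L R : Finset (Fin n)),
          Disjoint L R → L ∪ R = Finset.univ →
          Even (M n d) →
          M1 d L ≤ M1 d R →
          (dmax d : ℝ) ^ 4 ≤ δ * (M n d : ℝ) →
          (M2 d R : ℝ) ≤ c * (dmax d : ℝ) ^ 3 →
          (((restricted n d L).filter (fun f =>
              0 < numLoops f ∨ 0 < numMixedDoubles L f ∨ 0 < numPureDoubles L f)).card : ℝ) /
            ((restricted n d L).card : ℝ) ≤ C * (dmax d : ℝ) ^ 4 / (M n d : ℝ) := by
  intro c hc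
  refine ⟨20 * c, by positivity, 1/3, by norm_num, ?_⟩
  intro n d L R hdisj hunion _heven hM1LR hdelta hM2R
  classical
  set A := restricted n d L with hA
  set B := A.filter (fun f =>
      0 < numLoops f ∨ 0 < numMixedDoubles L f ∨ 0 < numPureDoubles L f) with hB
  set Bl := A.filter (fun f => ∃ p, (f p).1 = p.1) with hBl
  set Bd := A.filter (fun f => ∃ p q, p ≠ q ∧ p.1 = q.1 ∧ (f p).1 ∉ L ∧
      (f p).1 = (f q).1 ∧ (f p).1 ≠ p.1) with hBd
  have hRHS0 : (0:ℝ) ≤ 20 * c * (dmax d : ℝ) ^ 4 / (M n d : ℝ) := by positivity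
  rcases Finset.eq_empty_or_nonempty B with hBe | hBne
  · rw [hBe]
    simpa using hRHS0
  -- B is nonempty
  have hBsub : B ⊆ Bl ∪ Bd := by
    intro f hf
    rw [hB, Finset.mem_filter] at hf
    obtain ⟨hfA, hbad⟩ := hf
    rcases hbad with h | h | h
    · refine Finset.mem_union_left _ (Finset.mem_filter.2 ⟨hfA, ?_⟩)
      have hcard : 0 < (Finset.univ.filter (fun p : Pt n d => (f p).1 = p.1)).card :=
        lt_of_lt_of_le h (Nat.div_le_self _ _)
      obtain ⟨p, hp⟩ := Finset.card_pos.1 hcard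
      exact ⟨p, (Finset.mem_filter.1 hp).2⟩
    · refine Finset.mem_union_right _ (Finset.mem_filter.2 ⟨hfA, ?_⟩)
      have hcard : 0 < (Finset.univ.filter (fun pq : Pt n d × Pt n d =>
          pq.1 ≠ pq.2 ∧ pq.1.1 = pq.2.1 ∧ pq.1.1 ∈ L ∧ (f pq.1).1 ∉ L ∧
            (f pq.1).1 = (f pq.2).1)).card := lt_of_lt_of_le h (Nat.div_le_self _ _)
      obtain ⟨pq, hpq⟩ := Finset.card_pos.1 hcard
      obtain ⟨h1, h2, h3, h4, h5⟩ := (Finset.mem_filter.1 hpq).2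
      exact ⟨pq.1, pq.2, h1, h2, h4, h5, fun hh => h4 (hh.symm ▸ h3)⟩
    · refine Finset.mem_union_right _ (Finset.mem_filter.2 ⟨hfA, ?_⟩)
      have hcard : 0 < (Finset.univ.filter (fun pq : Pt n d × Pt n d =>
          pq.1 ≠ pq.2 ∧ pq.1.1 = pq.2.1 ∧ pq.1.1 ∉ L ∧ (f pq.1).1 ∉ L ∧
            (f pq.1).1 = (f pq.2).1 ∧ (f pq.1).1 ≠ pq.1.1)).card :=
        lt_of_lt_of_le h (Nat.div_le_self _ _)
      obtain ⟨pq, hpq⟩ := Finset.card_pos.1 hcard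
      obtain ⟨h1, h2, _h3, h4, h5, h6⟩ := (Finset.mem_filter.1 hpq).2
      exact ⟨pq.1, pq.2, h1, h2, h4, h5, h6⟩
  -- dmax ≥ 2
  obtain ⟨f0, hf0⟩ := hBne
  have hd2 : 2 ≤ dmax d := by
    have hf0' := hBsub hf0
    rcases Finset.mem_union.1 hf0' with h | h
    · rw [hBl, Finset.mem_filter] at h
      obtain ⟨hfA, p, hp⟩ := h
      obtain ⟨_, hfpf, _⟩ := mem_restricted_iff.1 hfA
      exact two_le_dmax (hfpf p) hp
    · rw [hBd, Finset.mem_filter] at h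
      obtain ⟨hfA, p, q, hpq, hbkt, _⟩ := h
      exact two_le_dmax hpq hbkt
  have hA0 : 0 < A.card :=
    Finset.card_pos.2 ⟨f0, (Finset.filter_subset _ _) hf0⟩
  -- identification of R and counts
  have hR : Finset.univ \ L = R := by
    rw [← hunion]
    exact Finset.union_sdiff_cancel_left hdisj
  have hfR : Finset.univ.filter (fun i : Fin n => i ∉ L) = R := by
    rw [← hR]; ext i; simp
  have hRpts : (Finset.univ.filter (fun p : Pt n d => p.1 ∉ L)).card = M1 d R := by
    rw [card_pts (P := fun i => i ∉ L), hfR, M1]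
  have hsumR : ∑ i ∈ Finset.univ.filter (· ∉ L), d i * (d i - 1) = M2 d R := by
    rw [hfR, M2]
  have hsumU : ∑ i ∈ Finset.univ.filter (fun _ : Fin n => True), d i * (d i - 1) = M2 d Finset.univ := by
    rw [Finset.filter_true, M2]
  have hM2U : M2 d Finset.univ ≤ dmax d * M n d := by
    rw [M2, M, Finset.mul_sum]
    refine Finset.sum_le_sum (fun i _ => ?_)
    calc d i * (d i - 1) ≤ d i * dmax d :=
          Nat.mul_le_mul_left _ (le_trans (Nat.sub_le _ _) (Finset.le_sup (Finset.mem_univ i)))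
      _ = dmax d * d i := Nat.mul_comm _ _
  have hMsum : M1 d L + M1 d R = M n d := by
    rw [M1, M1, M, ← Finset.sum_union hdisj, hunion]
  -- the two counting bounds
  have hLoop : Bl.card * (M1 d R - 2) ≤ A.card * M2 d R := by
    have := loop_count (n := n) (d := d) (L := L)
    rwa [hRpts, hsumR] at this
  have hDbl : Bd.card * ((M1 d R - 4) * (M1 d R - 6)) ≤
      A.card * (M2 d Finset.univ * M2 d R) := by
    have := double_count (n := n) (d := d) (L := L)
    rwa [hRpts, hsumR, hsumU] at this
  -- real arithmetic
  set D := (dmax d : ℝ) with hD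
  set mR := (M n d : ℝ) with hmR
  have hD2 : (2:ℝ) ≤ D := by rw [hD]; exact_mod_cast hd2
  have hD16 : (16:ℝ) ≤ D ^ 4 := by
    have hDsq : (4:ℝ) ≤ D ^ 2 := by nlinarith
    nlinarith [hDsq, sq_nonneg (D ^ 2 - 4)]
  have hM48 : (48:ℝ) ≤ mR := by
    rw [hmR]
    nlinarith [hdelta]
  have hm1 : mR ≤ 2 * (M1 d R : ℝ) := by
    have h : M n d ≤ 2 * M1 d R := by omega
    rw [hmR]
    exact_mod_cast h
  have hm1R24 : 24 ≤ M1 d R := by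
    have : (24:ℝ) ≤ (M1 d R : ℝ) := by linarith
    exact_mod_cast this
  have hM2U' : (M2 d Finset.univ : ℝ) ≤ D * mR := by
    rw [hD, hmR]
    exact_mod_cast hM2U
  have hmRpos : (0:ℝ) < mR := by linarith
  have hAr : (0:ℝ) < (A.card : ℝ) := by exact_mod_cast hA0
  -- loop bound in ℝ
  have hLoopR : (Bl.card : ℝ) * ((M1 d R : ℝ) - 2) ≤ (A.card : ℝ) * (M2 d R : ℝ) := by
    have := hLoop
    have hcast : ((M1 d R - 2 : ℕ) : ℝ) = (M1 d R : ℝ) - 2 := by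
      rw [Nat.cast_sub (by omega)]; norm_num
    calc (Bl.card : ℝ) * ((M1 d R : ℝ) - 2) = ((Bl.card * (M1 d R - 2) : ℕ) : ℝ) := by
          rw [Nat.cast_mul, hcast]
      _ ≤ ((A.card * M2 d R : ℕ) : ℝ) := by exact_mod_cast this
      _ = _ := by rw [Nat.cast_mul]
  have hDblR : (Bd.card : ℝ) * (((M1 d R : ℝ) - 4) * ((M1 d R : ℝ) - 6)) ≤
      (A.card : ℝ) * ((M2 d Finset.univ : ℝ) * (M2 d R : ℝ)) := by
    have := hDbl
    have hc4 : ((M1 d R - 4 : ℕ) : ℝ) = (M1 d R : ℝ) - 4 := by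
      rw [Nat.cast_sub (by omega)]; norm_num
    have hc6 : ((M1 d R - 6 : ℕ) : ℝ) = (M1 d R : ℝ) - 6 := by
      rw [Nat.cast_sub (by omega)]; norm_num
    calc (Bd.card : ℝ) * (((M1 d R : ℝ) - 4) * ((M1 d R : ℝ) - 6))
        = ((Bd.card * ((M1 d R - 4) * (M1 d R - 6)) : ℕ) : ℝ) := by
          rw [Nat.cast_mul, Nat.cast_mul, hc4, hc6]
      _ ≤ ((A.card * (M2 d Finset.univ * M2 d R) : ℕ) : ℝ) := by exact_mod_cast this
      _ = _ := by rw [Nat.cast_mul, Nat.cast_mul]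
  have hm1q : mR / 4 ≤ (M1 d R : ℝ) - 6 := by linarith
  have hm1q4 : mR / 4 ≤ (M1 d R : ℝ) - 4 := by linarith
  have hm1q2 : mR / 4 ≤ (M1 d R : ℝ) - 2 := by linarith
  have hBl0 : (0:ℝ) ≤ (Bl.card : ℝ) := Nat.cast_nonneg _
  have hBd0 : (0:ℝ) ≤ (Bd.card : ℝ) := Nat.cast_nonneg _
  have hM2R0 : (0:ℝ) ≤ (M2 d R : ℝ) := Nat.cast_nonneg _
  -- Bl.card * mR ≤ 4 c A D^4
  have hBlF : (Bl.card : ℝ) * mR ≤ 4 * c * (A.card : ℝ) * D ^ 4 := by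
    have h1 : (Bl.card : ℝ) * (mR / 4) ≤ (A.card : ℝ) * (c * D ^ 3) := by
      calc (Bl.card : ℝ) * (mR / 4) ≤ (Bl.card : ℝ) * ((M1 d R : ℝ) - 2) :=
            mul_le_mul_of_nonneg_left hm1q2 hBl0
        _ ≤ (A.card : ℝ) * (M2 d R : ℝ) := hLoopR
        _ ≤ (A.card : ℝ) * (c * D ^ 3) := mul_le_mul_of_nonneg_left hM2R (le_of_lt hAr)
    have hD34 : D ^ 3 ≤ D ^ 4 := by nlinarith
    nlinarith [mul_le_mul_of_nonneg_left hD34 (mul_pos hc hAr).le]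
  -- Bd.card * mR ≤ 16 c A D^4
  have hBdF : (Bd.card : ℝ) * mR ≤ 16 * c * (A.card : ℝ) * D ^ 4 := by
    have h1 : (Bd.card : ℝ) * (mR / 4 * (mR / 4)) ≤ (A.card : ℝ) * (c * D ^ 4 * mR) := by
      calc (Bd.card : ℝ) * (mR / 4 * (mR / 4))
          ≤ (Bd.card : ℝ) * (((M1 d R : ℝ) - 4) * ((M1 d R : ℝ) - 6)) := by
            apply mul_le_mul_of_nonneg_left _ hBd0
            exact mul_le_mul hm1q4 hm1q (by linarith) (by linarith)
        _ ≤ (A.card : ℝ) * ((M2 d Finset.univ : ℝ) * (M2 d R : ℝ)) := hDblR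
        _ ≤ (A.card : ℝ) * ((D * mR) * (c * D ^ 3)) := by
            apply mul_le_mul_of_nonneg_left _ (le_of_lt hAr)
            exact mul_le_mul hM2U' hM2R hM2R0 (by positivity)
        _ = (A.card : ℝ) * (c * D ^ 4 * mR) := by ring
    have h2 : (Bd.card : ℝ) * mR * (mR / 16) ≤ 16 * c * (A.card : ℝ) * D ^ 4 * (mR / 16) := by
      calc (Bd.card : ℝ) * mR * (mR / 16) = (Bd.card : ℝ) * (mR / 4 * (mR / 4)) := by ring
        _ ≤ (A.card : ℝ) * (c * D ^ 4 * mR) := h1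
        _ = 16 * c * (A.card : ℝ) * D ^ 4 * (mR / 16) := by ring
    exact le_of_mul_le_mul_right h2 (by positivity)
  -- conclude
  have hBcard : (B.card : ℝ) ≤ (Bl.card : ℝ) + (Bd.card : ℝ) := by
    have : B.card ≤ (Bl ∪ Bd).card := Finset.card_le_card hBsub
    have h2 := Finset.card_union_le Bl Bd
    exact_mod_cast le_trans this h2
  rw [div_le_div_iff₀ hAr hmRpos]
  calc (B.card : ℝ) * mR ≤ ((Bl.card : ℝ) + (Bd.card : ℝ)) * mR := by
        apply mul_le_mul_of_nonneg_right hBcard (le_of_lt hmRpos)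
    _ = (Bl.card : ℝ) * mR + (Bd.card : ℝ) * mR := by ring
    _ ≤ 4 * c * (A.card : ℝ) * D ^ 4 + 16 * c * (A.card : ℝ) * D ^ 4 := by
        exact add_le_add hBlF hBdF
    _ = 20 * c * D ^ 4 * (A.card : ℝ) := by ring



end RandomBGraph
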